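/- Let g ∈ C¹(ℝ) satisfy g(0) = 0, g'(0) = 0, and the Hölder-type bound |g'(t)| ≤ C|t|^α for all t ∈ [-1,1], where C > 0 and α ∈ (0,1]. Let Ω = {(s,t) ∈ ℝ² : s > g(t)}. Then there exists r₀ > 0, depending only on C and α, such that for every r ∈ (0, r₀] and every point E = (s*, 0) with s* ∈ [0, r), the set B_r(E) ∩ Ω is connected. -/

import Mathlib

set_option maxHeartbeats 800000 in
/-- Connectivity of small balls intersected with a domain above a C^{1,α} graph:
if `g ∈ C¹` with `g(0) = g'(0) = 0` and `|g'(t)| ≤ C|t|^α` on `[-1,1]`, then there is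
`r₀ > 0` (depending only on `C`, `α`) such that for every `r ∈ (0, r₀]` and every point
`E = (s*, 0)` with `s* ∈ [0, r)`, the set `B_r(E) ∩ {s > g(t)}` is connected. -/
theorem ball_inter_epigraph_connected (C α : ℝ) (hC : 0 < C) (hα : α ∈ Set.Ioc (0 : ℝ) 1)
    (g : ℝ → ℝ) (hg : ContDiff ℝ 1 g) (hg0 : g 0 = 0) (hg'0 : deriv g 0 = 0)
    (hHold : ∀ t ∈ Set.Icc (-1 : ℝ) 1, |deriv g t| ≤ C * |t| ^ α) :
    ∃ r₀ > 0, ∀ r : ℝ, 0 < r → r ≤ r₀ → ∀ s : ℝ, 0 ≤ s → s < r →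
      IsConnected
        (Metric.ball ((WithLp.equiv 2 (Fin 2 → ℝ)).symm ![s, 0]) r ∩
          {p : EuclideanSpace ℝ (Fin 2) | g (p 1) < p 0}) := by
  obtain ⟨hα0, hα1⟩ := hα
  have h4C : (0:ℝ) < (4*C)⁻¹ := by positivity
  refine ⟨min 1 ((4*C)⁻¹ ^ (1/α)), lt_min one_pos (Real.rpow_pos_of_pos h4C _), ?_⟩
  intro r hr hrr₀ s hs hsr
  have hr1 : r ≤ 1 := hrr₀.trans (min_le_left _ _)
  have hrα : C * r ^ α ≤ 1/4 := by
    have h1 : r ^ α ≤ ((4*C)⁻¹ ^ (1/α)) ^ α :=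
      Real.rpow_le_rpow hr.le (hrr₀.trans (min_le_right _ _)) hα0.le
    have h2 : ((4*C)⁻¹ ^ (1/α : ℝ)) ^ α = (4*C)⁻¹ := by
      rw [← Real.rpow_mul h4C.le, one_div_mul_cancel (ne_of_gt hα0), Real.rpow_one]
    have h3 : r ^ α ≤ (4*C)⁻¹ := h2 ▸ h1
    calc C * r ^ α ≤ C * (4*C)⁻¹ := by
          exact mul_le_mul_of_nonneg_left h3 hC.le
      _ = 1/4 := by field_simp
  set E : EuclideanSpace ℝ (Fin 2) := (WithLp.equiv 2 (Fin 2 → ℝ)).symm ![s, 0] with hE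
  set c : EuclideanSpace ℝ (Fin 2) := (WithLp.equiv 2 (Fin 2 → ℝ)).symm ![s + r/2, 0] with hc
  have hE0 : E 0 = s := rfl
  have hE1 : E 1 = 0 := rfl
  have hc0 : c 0 = s + r/2 := rfl
  have hc1 : c 1 = 0 := rfl
  -- distance formula specialization
  have hdist : ∀ p : EuclideanSpace ℝ (Fin 2), |p 1 - E 1| ≤ dist p E := by
    intro p
    rw [EuclideanSpace.dist_eq, Fin.sum_univ_two]
    have : |p 1 - E 1| = Real.sqrt (dist (p 1) (E 1) ^ 2) := by
      rw [Real.sqrt_sq_eq_abs, Real.dist_eq, abs_abs]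
    rw [this]
    apply Real.sqrt_le_sqrt
    nlinarith [sq_nonneg (dist (p 0) (E 0))]
  have hcball : c ∈ Metric.ball E r := by
    rw [Metric.mem_ball, EuclideanSpace.dist_eq, Fin.sum_univ_two, hc0, hc1, hE0, hE1]
    have : dist (s + r/2) s ^ 2 + dist (0:ℝ) 0 ^ 2 = (r/2)^2 := by
      rw [Real.dist_eq, dist_self]
      rw [show s + r/2 - s = r/2 by ring, abs_of_nonneg (by positivity : (0:ℝ) ≤ r/2)]
      ring
    rw [this, Real.sqrt_sq (by positivity : (0:ℝ) ≤ r/2)]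
    linarith
  have hcΩ : g (c 1) < c 0 := by rw [hc0, hc1, hg0]; linarith
  set S := Metric.ball E r ∩ {p : EuclideanSpace ℝ (Fin 2) | g (p 1) < p 0} with hS
  have hcS : c ∈ S := ⟨hcball, hcΩ⟩
  have hstar : ∀ p ∈ S, segment ℝ c p ⊆ S := by
    rintro p ⟨hpball, hpΩ⟩ q ⟨a, b, ha, hb, hab, rfl⟩
    refine ⟨convex_ball E r hcball hpball ha hb hab, ?_⟩
    set t := p 1 with htdef
    have ht : |t| < r := by
      have := hdist p
      rw [hE1, sub_zero] at this
      exact lt_of_le_of_lt this (Metric.mem_ball.mp hpball)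
    have hq1 : (a • c + b • p) 1 = b * t := by
      simp [PiLp.add_apply, PiLp.smul_apply, hc1, smul_eq_mul, htdef]
    have hq0 : (a • c + b • p) 0 = a * (s + r/2) + b * p 0 := by
      simp [PiLp.add_apply, PiLp.smul_apply, hc0, smul_eq_mul]
    show g ((a • c + b • p) 1) < (a • c + b • p) 0
    rw [hq1, hq0]
    rcases eq_or_lt_of_le hb with hb0 | hbpos
    · -- b = 0, a = 1
      rw [← hb0]
      have ha1 : a = 1 := by linarith
      rw [ha1]
      simp [hg0]
      linarith
    · -- b > 0
      have hb1 : b ≤ 1 := by linarith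
      -- MVT estimate on Icc (-|t|) |t|
      have hbound : ∀ x ∈ Set.Icc (-|t|) |t|, ‖deriv g x‖ ≤ C * |t| ^ α := by
        intro x hx
        have hxabs : |x| ≤ |t| := abs_le.mpr ⟨hx.1, hx.2⟩
        have hx1 : x ∈ Set.Icc (-1:ℝ) 1 := by
          constructor <;> [linarith [neg_abs_le x, hxabs, ht, hr1];
            linarith [le_abs_self x, hxabs, ht, hr1]]
        calc ‖deriv g x‖ = |deriv g x| := rfl
          _ ≤ C * |x| ^ α := hHold x hx1
          _ ≤ C * |t| ^ α :=
              mul_le_mul_of_nonneg_left (Real.rpow_le_rpow (abs_nonneg x) hxabs hα0.le) hC.le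
      have hdiff : ∀ x ∈ Set.Icc (-|t|) |t|, DifferentiableAt ℝ g x := fun x _ =>
        hg.differentiable one_ne_zero x
      have hmvt : ∀ u ∈ Set.Icc (-|t|) |t|, ∀ v ∈ Set.Icc (-|t|) |t|,
          |g u - g v| ≤ C * |t| ^ α * |u - v| := by
        intro u hu v hv
        exact Convex.norm_image_sub_le_of_norm_deriv_le hdiff hbound (convex_Icc _ _) hv hu
      have htmem : t ∈ Set.Icc (-|t|) |t| := ⟨neg_abs_le t, le_abs_self t⟩
      have h0mem : (0:ℝ) ∈ Set.Icc (-|t|) |t| := ⟨neg_nonpos_of_nonneg (abs_nonneg t), abs_nonneg t⟩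
      have hbtmem : b * t ∈ Set.Icc (-|t|) |t| := by
        have : |b * t| ≤ |t| := by
          rw [abs_mul, abs_of_nonneg hb]
          nlinarith [abs_nonneg t]
        exact ⟨by linarith [neg_abs_le (b*t), neg_le_neg this], (le_abs_self (b*t)).trans this⟩
      have h1 : |g (b*t) - g t| ≤ C * |t| ^ α * (a * |t|) := by
        have := hmvt (b*t) hbtmem t htmem
        have habs : |b*t - t| = a * |t| := by
          rw [show b*t - t = -(a*t) by linear_combination t * hab, abs_neg, abs_mul, abs_of_nonneg ha]
        rwa [habs] at this
      have h2 : |g t| ≤ C * |t| ^ α * |t| := by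
        have := hmvt t htmem 0 h0mem
        rwa [hg0, sub_zero, sub_zero] at this
      -- conclude
      have hK : (0:ℝ) ≤ C * |t| ^ α := by positivity
      have hgbt : g (b*t) ≤ b * g t + 2 * (a * (C * |t| ^ α * |t|)) := by
        have e1 : g (b*t) - b * g t = (g (b*t) - g t) + a * g t := by
          have : a = 1 - b := by linarith
          rw [this]; ring
        have e2 : g (b*t) - g t ≤ a * (C * |t| ^ α * |t|) :=
          (abs_le.mp h1).2.trans_eq (by ring)
        have e3 : a * g t ≤ a * (C * |t| ^ α * |t|) :=
          mul_le_mul_of_nonneg_left ((le_abs_self _).trans h2) ha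
        linarith [e1, e2, e3]
      have hpow : C * |t| ^ α * |t| ≤ C * r ^ α * r := by
        have hrapow : |t| ^ α ≤ r ^ α := Real.rpow_le_rpow (abs_nonneg t) ht.le hα0.le
        have h1 : C * |t| ^ α ≤ C * r ^ α := mul_le_mul_of_nonneg_left hrapow hC.le
        exact mul_le_mul h1 ht.le (abs_nonneg t) (by positivity)
      have haux : a * (C * |t| ^ α * |t|) ≤ a * (r/4) := by
        refine mul_le_mul_of_nonneg_left (hpow.trans ?_) ha
        have := mul_le_mul_of_nonneg_right hrα hr.le
        linarith
      have hlt : b * g t < b * p 0 := mul_lt_mul_of_pos_left hpΩ hbpos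
      have has : 0 ≤ a * s := mul_nonneg ha hs
      linarith [hgbt, haux, hlt, has]
  refine ⟨⟨c, hcS⟩, isPreconnected_of_forall c fun p hp =>
    ⟨segment ℝ c p, hstar p hp, left_mem_segment ℝ c p, right_mem_segment ℝ c p,
      (convex_segment c p).isPreconnected⟩⟩
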